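/- Let r ≥ 1, let V_r = ℤ[X]/(U_r), and write w = u_{r−1} (the image of U_{r−1} in V_r). Then for every integer i with 0 ≤ i < r, one has u_i · w = u_{r−1−i} in V_r; in particular w² = u_0 = 1. -/
import Mathlib


open Polynomial

/-- The polynomials `U n` with `U 0 = 1`, `U 1 = X`, `U (n+1) = X * U n - U (n-1)`. -/
noncomputable def U (n : ℕ) : Polynomial ℤ := Polynomial.dickson 2 1 n

/-- The Verlinde algebra `V r = ℤ[X]/(U r)`. -/
abbrev Verlinde (r : ℕ) : Type := Polynomial ℤ ⧸ Ideal.span {U r}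

/-- `u r i` is the image of `U i` in the Verlinde algebra `V r`. -/
noncomputable def u (r i : ℕ) : Verlinde r :=
  Ideal.Quotient.mk (Ideal.span {U r}) (U i)

lemma U_zero : U 0 = 1 := by
  rw [U, Polynomial.dickson_zero]; norm_num

lemma u_zero (r : ℕ) : u r 0 = 1 := by
  rw [u, U_zero, map_one]

lemma u_self (r : ℕ) : u r r = 0 := by
  rw [u, Ideal.Quotient.eq_zero_iff_mem]
  exact Ideal.mem_span_singleton_self _

lemma u_add_two (r n : ℕ) : u r (n + 2) = u r 1 * u r (n + 1) - u r n := by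
  have h : U (n + 2) = U 1 * U (n + 1) - U n := by
    simp [U, Polynomial.dickson_add_two, Polynomial.dickson_one]
  unfold u
  rw [h, map_sub, map_mul]

lemma key (r : ℕ) : ∀ i, i < r → u r i * u r (r - 1) = u r (r - 1 - i)
  | 0, h => by simp [u_zero]
  | 1, h => by
      obtain ⟨s, rfl⟩ : ∃ s, r = s + 2 := ⟨r - 2, by omega⟩
      have e := (u_add_two (s + 2) s).symm.trans (u_self (s + 2))
      have h1 : s + 2 - 1 = s + 1 := by omega
      have h2 : s + 2 - 1 - 1 = s := by omega
      rw [h2, h1]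
      exact sub_eq_zero.mp e
  | (i + 2), h => by
      obtain ⟨s, rfl⟩ : ∃ s, r = i + s + 3 := ⟨r - i - 3, by omega⟩
      have e2 := key (i + s + 3) (i + 1) (by omega)
      have e1 := key (i + s + 3) i (by omega)
      have ha : i + s + 3 - 1 - (i + 1) = s + 1 := by omega
      have hb : i + s + 3 - 1 - i = s + 2 := by omega
      have hc : i + s + 3 - 1 - (i + 2) = s := by omega
      rw [ha] at e2
      rw [hb] at e1
      rw [hc, u_add_two, sub_mul, mul_assoc, e2, e1, u_add_two]
      ring

/-- Let `r ≥ 1` and let `w = u (r-1)` in the Verlinde algebra `V r`.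
Then `u i * w = u (r-1-i)` for all `0 ≤ i < r`; in particular `w ^ 2 = 1`. -/
theorem verlinde_mul_top (r : ℕ) (hr : 1 ≤ r) :
    (∀ i : ℕ, i < r → u r i * u r (r - 1) = u r (r - 1 - i)) ∧
      u r (r - 1) * u r (r - 1) = 1 := by
  refine ⟨key r, ?_⟩
  have := key r (r - 1) (by omega)
  rwa [Nat.sub_self, u_zero] at this
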